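/- Let D ≥ 1, n ≥ 2, and let T : (Fin n → Fin D × Fin D) → ℝ be a pair tensor with within-pair symmetry, slot-exchange symmetry, and satisfying the cyclic identity. Then every component of T of the form F₁ vanishes: for any slot assignment P : Fin n → Fin D × Fin D and distinct slots k ≠ l such that P k = (a,a) and P l = (a,b) for some a, b ∈ Fin D, we have T P = 0. -/
import Mathlib


/-- A pair tensor has within-pair symmetry if its value is unchanged when the
two entries of any single pair-slot are swapped. -/
def WithinPairSymm {n D : ℕ} (T : (Fin n → Fin D × Fin D) → ℝ) : Prop :=
  ∀ (P : Fin n → Fin D × Fin D) (k : Fin n),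
    T (Function.update P k ((P k).2, (P k).1)) = T P

/-- A pair tensor has slot-exchange symmetry if its value is unchanged under
precomposition with any permutation of the slots. -/
def SlotExchangeSymm {n D : ℕ} (T : (Fin n → Fin D × Fin D) → ℝ) : Prop :=
  ∀ (P : Fin n → Fin D × Fin D) (σ : Equiv.Perm (Fin n)), T (P ∘ σ) = T P

/-- A pair tensor satisfies the cyclic identity if for any two distinct slots,
any fixed assignment of the remaining slots, and any indices `a b c d`, the
cyclic sum of its components vanishes. -/
def CyclicIdentity {n D : ℕ} (T : (Fin n → Fin D × Fin D) → ℝ) : Prop :=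
  ∀ (P : Fin n → Fin D × Fin D) (k l : Fin n), k ≠ l →
    ∀ a b c d : Fin D,
      T (Function.update (Function.update P k (a, b)) l (c, d)) +
      T (Function.update (Function.update P k (a, c)) l (d, b)) +
      T (Function.update (Function.update P k (a, d)) l (b, c)) = 0

theorem stmt_3 (D n : ℕ) (hD : 1 ≤ D) (hn : 2 ≤ n)
    (T : (Fin n → Fin D × Fin D) → ℝ)
    (hwp : WithinPairSymm T) (hse : SlotExchangeSymm T)
    (hcyc : CyclicIdentity T) :
    ∀ (P : Fin n → Fin D × Fin D) (k l : Fin n), k ≠ l →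
      ∀ a b : Fin D, P k = (a, a) → P l = (a, b) → T P = 0 := by
  intro P k l hkl a b hPk hPl
  have hlk : l ≠ k := hkl.symm
  have hcyc1 := hcyc P k l hkl a a a b
  set Q1 := Function.update (Function.update P k (a, a)) l (a, b) with hQ1
  set Q2 := Function.update (Function.update P k (a, a)) l (b, a) with hQ2
  set Q3 := Function.update (Function.update P k (a, b)) l (a, a) with hQ3
  have e1 : Q1 = P := by
    funext j
    rcases eq_or_ne j l with rfl | hjl
    · simp [hQ1, hPl]
    · rcases eq_or_ne j k with rfl | hjk
      · simp [hQ1, hjl, hPk, Function.update_of_ne]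
      · simp [hQ1, hjl, hjk, Function.update_of_ne]
  have e2 : T Q2 = T P := by
    have := hwp Q2 l
    have h2l : Q2 l = (b, a) := by simp [hQ2]
    rw [h2l] at this
    have : T (Function.update Q2 l (a, b)) = T Q2 := this
    have hupd : Function.update Q2 l (a, b) = Q1 := by
      simp [hQ2, hQ1, Function.update_idem]
    rw [hupd, e1] at this
    exact this.symm
  have e3 : T Q3 = T P := by
    have := hse Q3 (Equiv.swap k l)
    have hcomp : Q3 ∘ (Equiv.swap k l) = P := by
      funext j
      rcases eq_or_ne j k with rfl | hjk
      · rw [Function.comp_apply, Equiv.swap_apply_left]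
        simp [hQ3, hPk]
      · rcases eq_or_ne j l with rfl | hjl
        · rw [Function.comp_apply, Equiv.swap_apply_right]
          simp [hQ3, hPl, Function.update_of_ne hkl]
        · rw [Function.comp_apply, Equiv.swap_apply_of_ne_of_ne hjk hjl]
          simp [hQ3, Function.update_of_ne hjl, Function.update_of_ne hjk]
    rw [hcomp] at this
    exact this.symm
  rw [e1, e2, e3] at hcyc1
  linarith
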